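/- Abstract stability of the constrained conforming correction: if d solves the saddle-point system (d,w)_{H^1} + (p̄, ∇·w) = 0 for all w in the conforming space and (∇·d, q̄) = −(∇·v, q̄) for all constants q̄ ∈ ℝ, then testing w = d + α p̄ 𝐱 for small α > 0 yields ‖d‖²_{H^1} + c(α)‖p̄‖² ≤ C ‖mean(∇·v)‖², so in particular ‖d‖_{H^1} ≤ C ‖mean(∇·v)‖_{L²(Ω)}. -/

import Mathlib

/-- abstract stability of the constrained conforming correction.
`V` is the conforming subspace equipped with the `H¹` inner product,
`D : V →ₗ ℝ` represents `w ↦ |Ω|⁻¹ ∫_Ω ∇·w` (the mean divergence), and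
`xe ∈ V` is the field `𝐱` (normalized so that `D xe = 1`). If `d` and the
constant multiplier `p̄` solve the square saddle-point system
`⟪d,w⟫ + p̄ D w = 0` for all `w ∈ V` and `D d = −(mean ∇·v) = −D v`,
then `‖d‖ ≤ C |mean(∇·v)|` with `C` depending only on the space data. -/
theorem stmt_13 {V : Type*} [NormedAddCommGroup V] [InnerProductSpace ℝ V]
    [FiniteDimensional ℝ V]
    (D : V →ₗ[ℝ] ℝ) (xe : V) (hxe : D xe = 1) :
    ∃ C > (0 : ℝ), ∀ (d v : V) (pbar : ℝ),
      (∀ w : V, inner ℝ d w + pbar * D w = 0) →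
      D d = -(D v) →
      ‖d‖ ≤ C * |D v| := by
  have hxe0 : xe ≠ 0 := by
    intro h
    simp [h] at hxe
  refine ⟨‖xe‖, norm_pos_iff.mpr hxe0, ?_⟩
  intro d v pbar hsys hdd
  -- from w = xe : pbar = -⟪d, xe⟫
  have h1 : (inner ℝ d xe : ℝ) + pbar = 0 := by
    have := hsys xe
    rwa [hxe, mul_one] at this
  have hp : pbar = -(inner ℝ d xe : ℝ) := by linarith
  -- from w = d : ‖d‖² = pbar * D v
  have h2 : ‖d‖ ^ 2 = pbar * D v := by
    have := hsys d
    rw [hdd, real_inner_self_eq_norm_sq] at this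
    linarith [this]
  -- bound
  have hpb : |pbar| ≤ ‖d‖ * ‖xe‖ := by
    rw [hp, abs_neg]
    exact (abs_real_inner_le_norm d xe)
  have hkey : ‖d‖ ^ 2 ≤ ‖d‖ * ‖xe‖ * |D v| := by
    calc ‖d‖ ^ 2 = pbar * D v := h2
      _ ≤ |pbar * D v| := le_abs_self _
      _ = |pbar| * |D v| := abs_mul _ _
      _ ≤ ‖d‖ * ‖xe‖ * |D v| := by
          exact mul_le_mul_of_nonneg_right hpb (abs_nonneg _)
  rcases eq_or_lt_of_le (norm_nonneg d) with h0 | h0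
  · rw [← h0]
    positivity
  · have := hkey
    rw [pow_two] at this
    nlinarith
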